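/- Let s = (s_1,…,s_n) be a sequence of positive integers with s_1 = 1, and let s* = (s_1,…,s_n,1). For every r ∈ Ψ_n = {0,…,s_1−1} × ⋯ × {0,…,s_n−1}, we have des_{s*}(r_1,…,r_n,0) = asc_{s*}(z_1,…,z_n,0) = asc_s(z_1,…,z_n), where z_i = (−r_i) mod s_i (i.e., z_i ∈ {0,…,s_i−1} with r_i + z_i ≡ 0 mod s_i). -/

import Mathlib

/-- The generator vectors of the s-lecture hall parallelepiped: `lhVec s j` has
`i`-th coordinate `s i` for `i ≥ j` and `0` for `i < j`. -/
def lhVec {n : ℕ} (s : Fin n → ℕ) (j : Fin n) : Fin n → ℝ :=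
  fun i => if j ≤ i then (s i : ℝ) else 0

/-- The s-lecture hall parallelepiped: the half-open parallelepiped generated by
the vectors `lhVec s j`. -/
def lhPar {n : ℕ} (s : Fin n → ℕ) : Set (Fin n → ℝ) :=
  {x | ∃ c : Fin n → ℝ, (∀ j, 0 ≤ c j ∧ c j < 1) ∧ x = ∑ j, c j • lhVec s j}

/-- `lhEll S i` is the number of lattice points of `S ⊆ ℝ^N` whose last coordinate
equals `i`. -/
noncomputable def lhEll {N : ℕ} (S : Set (Fin N → ℝ)) (i : ℕ) : ℕ :=
  Set.ncard {x : Fin N → ℤ | (fun k => (x k : ℝ)) ∈ S ∧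
    ∀ j : Fin N, (j : ℕ) = N - 1 → x j = (i : ℤ)}

/-- The number of s-descents of `r`: indices `i` with `r i / s i > r (i+1) / s (i+1)`. -/
noncomputable def sDes {N : ℕ} (s : Fin N → ℕ) (r : Fin N → ℤ) : ℕ :=
  Set.ncard {i : Fin N | ∃ h : (i : ℕ) + 1 < N,
    (r i : ℚ) / (s i : ℚ) > (r ⟨(i : ℕ) + 1, h⟩ : ℚ) / (s ⟨(i : ℕ) + 1, h⟩ : ℚ)}

/-- The number of s-ascents of `r`: indices `i` with `r i / s i < r (i+1) / s (i+1)`. -/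
noncomputable def sAsc {N : ℕ} (s : Fin N → ℕ) (r : Fin N → ℤ) : ℕ :=
  Set.ncard {i : Fin N | ∃ h : (i : ℕ) + 1 < N,
    (r i : ℚ) / (s i : ℚ) < (r ⟨(i : ℕ) + 1, h⟩ : ℚ) / (s ⟨(i : ℕ) + 1, h⟩ : ℚ)}

/-- The number of (regular) descents of `r`: indices `i` with `r i > r (i+1)`. -/
noncomputable def rDes {N : ℕ} (r : Fin N → ℤ) : ℕ :=
  Set.ncard {i : Fin N | ∃ h : (i : ℕ) + 1 < N, r ⟨(i : ℕ) + 1, h⟩ < r i}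

/-- The number of (regular) ascents of `r`: indices `i` with `r i < r (i+1)`. -/
noncomputable def rAsc {N : ℕ} (r : Fin N → ℤ) : ℕ :=
  Set.ncard {i : Fin N | ∃ h : (i : ℕ) + 1 < N, r i < r ⟨(i : ℕ) + 1, h⟩}

/-- The number of s-descents of `r` at positions strictly before position `i`. -/
noncomputable def sDesLt {N : ℕ} (s : Fin N → ℕ) (r : Fin N → ℤ) (i : Fin N) : ℕ :=
  Set.ncard {j : Fin N | (j : ℕ) < (i : ℕ) ∧ ∃ h : (j : ℕ) + 1 < N,
    (r j : ℚ) / (s j : ℚ) > (r ⟨(j : ℕ) + 1, h⟩ : ℚ) / (s ⟨(j : ℕ) + 1, h⟩ : ℚ)}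

/-- `lhPsi s` is the set `Ψ_n = {0,…,s 0 − 1} × ⋯ × {0,…,s (n-1) − 1}`. -/
def lhPsi {n : ℕ} (s : Fin n → ℕ) : Set (Fin n → ℤ) :=
  {r | ∀ i, 0 ≤ r i ∧ r i < (s i : ℤ)}

/-- `inDilate s t lam` says that the lattice point `lam` satisfies
`0 ≤ lam 0 / s 0 ≤ lam 1 / s 1 ≤ ⋯ ≤ lam (n-1) / s (n-1) ≤ t`,
i.e. lies in the `t`-th dilate of the s-lecture hall polytope. -/
def inDilate {n : ℕ} (s : Fin n → ℕ) (t : ℕ) (lam : Fin n → ℤ) : Prop :=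
  (∀ i : Fin n, (i : ℕ) = 0 → 0 ≤ (lam i : ℚ) / (s i : ℚ)) ∧
  (∀ i : Fin n, ∀ h : (i : ℕ) + 1 < n,
    (lam i : ℚ) / (s i : ℚ) ≤ (lam ⟨(i : ℕ) + 1, h⟩ : ℚ) / (s ⟨(i : ℕ) + 1, h⟩ : ℚ)) ∧
  (∀ i : Fin n, (i : ℕ) = n - 1 → (lam i : ℚ) / (s i : ℚ) ≤ (t : ℚ))

lemma myNcard {α : Type*} [Fintype α] (P : α → Prop) [DecidablePred P] :
    Set.ncard {x | P x} = ∑ x : α, if P x then 1 else 0 := by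
  rw [show {x | P x} = ↑(Finset.univ.filter P) by ext x; simp,
    Set.ncard_coe_finset, Finset.card_filter]

lemma keyAux (a b a' b' : ℚ) (ha : 0 ≤ a) (ha2 : a < 1) (hb : 0 ≤ b) (hb2 : b < 1)
    (hc : 0 ≤ a') (hc2 : a' < 1) (hd : 0 ≤ b') (hd2 : b' < 1)
    (hA : a = 0 ∧ a' = 0 ∨ a + a' = 1) (hB : b = 0 ∧ b' = 0 ∨ b + b' = 1) :
    ((if b < a then 1 else 0) + (if 0 < b then 1 else 0) : ℕ)
      = (if a' < b' then 1 else 0) + (if 0 < a then 1 else 0) := by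
  rcases hA with ⟨h1, h2⟩ | h1 <;> rcases hB with ⟨h3, h4⟩ | h3 <;> split_ifs <;> linarith

/-- if `s_1 = 1`, then
`des_{s*}(r,0) = asc_{s*}(Φ_s(r),0) = asc_s(Φ_s(r))`. -/
theorem stmt_17 (n : ℕ) (hn : 0 < n) (s : Fin n → ℕ) (hs : ∀ i, 0 < s i)
    (h1 : s ⟨0, hn⟩ = 1)
    (r : Fin n → ℤ) (hr : r ∈ lhPsi s)
    (z : Fin n → ℤ)
    (hz : ∀ i, 0 ≤ z i ∧ z i < (s i : ℤ) ∧ (r i + z i) % (s i : ℤ) = 0) :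
    sDes (Fin.snoc s 1) (Fin.snoc r (0 : ℤ)) = sAsc (Fin.snoc s 1) (Fin.snoc z (0 : ℤ)) ∧
      sAsc (Fin.snoc s 1) (Fin.snoc z (0 : ℤ)) = sAsc s z := by
  classical
  have hr' : ∀ i, 0 ≤ r i ∧ r i < (s i : ℤ) := hr
  set S : Fin (n+1) → ℕ := Fin.snoc s 1 with hSdef
  set R : Fin (n+1) → ℤ := Fin.snoc r (0:ℤ) with hRdef
  set Z : Fin (n+1) → ℤ := Fin.snoc z (0:ℤ) with hZdef
  have hfacts : ∀ j : Fin (n+1), 0 ≤ R j ∧ R j < (S j : ℤ) ∧ 0 ≤ Z j ∧ Z j < (S j : ℤ) ∧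
      ((R j = 0 ∧ Z j = 0) ∨ R j + Z j = (S j : ℤ)) := by
    intro j
    refine Fin.lastCases ?_ ?_ j
    · simp [hRdef, hZdef, hSdef]
    · intro i
      have h2 := hr' i
      have h3 := hz i
      simp only [hRdef, hZdef, hSdef, Fin.snoc_castSucc]
      have hd : (s i : ℤ) ∣ (r i + z i) := Int.dvd_of_emod_eq_zero h3.2.2
      have hs' : (0:ℤ) < (s i : ℤ) := by exact_mod_cast hs i
      have h5 : r i + z i = 0 ∨ r i + z i = (s i : ℤ) := by
        obtain ⟨k, hk⟩ := hd
        have hk0 : 0 ≤ k := by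
          by_contra hc
          push_neg at hc
          nlinarith [h2.1, h3.1]
        have hk2 : k < 2 := by
          by_contra hc
          push_neg at hc
          nlinarith [h2.2, h3.2.1]
        interval_cases k <;> omega
      omega
  have hSpos : ∀ j, (0:ℚ) < (S j : ℚ) := by
    intro j
    have := (hfacts j).1.trans_lt (hfacts j).2.1
    exact_mod_cast by exact_mod_cast this
  set Q : Fin (n+1) → ℚ := fun j => (R j : ℚ) / (S j : ℚ) with hQdef
  set W : Fin (n+1) → ℚ := fun j => (Z j : ℚ) / (S j : ℚ) with hWdef
  have hQ : ∀ j, 0 ≤ Q j ∧ Q j < 1 := by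
    intro j
    obtain ⟨a1, a2, a3, a4, a5⟩ := hfacts j
    exact ⟨div_nonneg (by exact_mod_cast a1) (le_of_lt (hSpos j)),
      (div_lt_one (hSpos j)).2 (by exact_mod_cast a2)⟩
  have hW : ∀ j, 0 ≤ W j ∧ W j < 1 := by
    intro j
    obtain ⟨a1, a2, a3, a4, a5⟩ := hfacts j
    exact ⟨div_nonneg (by exact_mod_cast a3) (le_of_lt (hSpos j)),
      (div_lt_one (hSpos j)).2 (by exact_mod_cast a4)⟩
  have hQW : ∀ j, (Q j = 0 ∧ W j = 0) ∨ Q j + W j = 1 := by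
    intro j
    rcases (hfacts j).2.2.2.2 with ⟨hR0, hZ0⟩ | hsum
    · left
      constructor
      · show (R j : ℚ) / (S j : ℚ) = 0; rw [hR0]; simp
      · show (Z j : ℚ) / (S j : ℚ) = 0; rw [hZ0]; simp
    · right
      have hcast : (R j : ℚ) + (Z j : ℚ) = (S j : ℚ) := by exact_mod_cast hsum
      show (R j : ℚ) / (S j : ℚ) + (Z j : ℚ) / (S j : ℚ) = 1
      rw [← add_div, hcast, div_self (ne_of_gt (hSpos j))]
  have hQ0 : Q 0 = 0 := by
    have hRz : R 0 = 0 := by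
      have e0 : (0 : Fin (n+1)) = Fin.castSucc ⟨0, hn⟩ := rfl
      rw [e0, hRdef, Fin.snoc_castSucc]
      have := hr' ⟨0, hn⟩
      omega
    show (R 0 : ℚ) / (S 0 : ℚ) = 0
    rw [hRz]; simp
  have hQlast : Q (Fin.last n) = 0 := by
    show (R (Fin.last n) : ℚ) / (S (Fin.last n) : ℚ) = 0
    rw [hRdef]; simp
  -- card computations
  have hdes : sDes S R = ∑ j : Fin n, (if Q j.succ < Q j.castSucc then 1 else 0) := by
    unfold sDes
    rw [myNcard, Fin.sum_univ_castSucc, if_neg, add_zero]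
    · refine Finset.sum_congr rfl fun j _ => if_congr ?_ rfl rfl
      have hlt : ((j.castSucc : ℕ)) + 1 < n+1 := by simp
      exact ⟨fun ⟨h, hc⟩ => hc, fun hc => ⟨hlt, hc⟩⟩
    · rintro ⟨h, -⟩; simp at h
  have hasc : sAsc S Z = ∑ j : Fin n, (if W j.castSucc < W j.succ then 1 else 0) := by
    unfold sAsc
    rw [myNcard, Fin.sum_univ_castSucc, if_neg, add_zero]
    · refine Finset.sum_congr rfl fun j _ => if_congr ?_ rfl rfl
      have hlt : ((j.castSucc : ℕ)) + 1 < n+1 := by simp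
      exact ⟨fun ⟨h, hc⟩ => hc, fun hc => ⟨hlt, hc⟩⟩
    · rintro ⟨h, -⟩; simp at h
  have hasc2 : sAsc s z = ∑ j : Fin n, (if W j.castSucc < W j.succ then 1 else 0) := by
    unfold sAsc
    rw [myNcard]
    refine Finset.sum_congr rfl fun j _ => if_congr ?_ rfl rfl
    have e1 : W j.castSucc = (z j : ℚ) / (s j : ℚ) := by
      show (Z j.castSucc : ℚ) / (S j.castSucc : ℚ) = _
      rw [hZdef, hSdef]; simp
    by_cases h : (j : ℕ) + 1 < n
    · have e2 : j.succ = Fin.castSucc ⟨(j : ℕ) + 1, h⟩ := by ext; simp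
      have e3 : W j.succ = (z ⟨(j : ℕ)+1, h⟩ : ℚ) / (s ⟨(j : ℕ)+1, h⟩ : ℚ) := by
        rw [e2]
        show (Z (Fin.castSucc ⟨(j : ℕ)+1, h⟩) : ℚ) / (S (Fin.castSucc ⟨(j : ℕ)+1, h⟩) : ℚ) = _
        rw [hZdef, hSdef, Fin.snoc_castSucc, Fin.snoc_castSucc]
      constructor
      · rintro ⟨h', hc⟩; rw [e1, e3]; exact hc
      · intro hc; rw [e1, e3] at hc; exact ⟨h, hc⟩
    · have e2 : j.succ = Fin.last n := by
        ext; simp only [Fin.val_succ, Fin.val_last]; omega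
      constructor
      · rintro ⟨h', -⟩; exact absurd h' h
      · intro hc
        exfalso
        rw [e2] at hc
        have hz0 : W (Fin.last n) = 0 := by
          show (Z (Fin.last n) : ℚ) / (S (Fin.last n) : ℚ) = 0
          rw [hZdef]; simp
        have := (hW j.castSucc).1
        rw [hz0] at hc
        linarith
  clear_value Q W S R Z
  -- key pointwise identity
  have key : ∀ j : Fin n,
      ((if Q j.succ < Q j.castSucc then 1 else 0) + (if 0 < Q j.succ then 1 else 0) : ℕ)
      = (if W j.castSucc < W j.succ then 1 else 0) + (if 0 < Q j.castSucc then 1 else 0) := by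
    intro j
    exact keyAux _ _ _ _ (hQ j.castSucc).1 (hQ j.castSucc).2 (hQ j.succ).1 (hQ j.succ).2
      (hW j.castSucc).1 (hW j.castSucc).2 (hW j.succ).1 (hW j.succ).2
      (hQW j.castSucc) (hQW j.succ)
  have hsum : (∑ j : Fin n, (if Q j.succ < Q j.castSucc then (1:ℕ) else 0))
        + (∑ j : Fin n, if 0 < Q j.succ then (1:ℕ) else 0)
      = (∑ j : Fin n, (if W j.castSucc < W j.succ then (1:ℕ) else 0))
        + (∑ j : Fin n, if 0 < Q j.castSucc then (1:ℕ) else 0) := by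
    rw [← Finset.sum_add_distrib, ← Finset.sum_add_distrib]
    exact Finset.sum_congr rfl fun j _ => key j
  have hps : (∑ j : Fin n, if 0 < Q j.succ then (1:ℕ) else 0)
      = ∑ j : Fin n, if 0 < Q j.castSucc then (1:ℕ) else 0 := by
    have e1 : ¬ (0:ℚ) < Q 0 := by rw [hQ0]; exact lt_irrefl 0
    have e2 : ¬ (0:ℚ) < Q (Fin.last n) := by rw [hQlast]; exact lt_irrefl 0
    have h1 : ∑ j : Fin (n+1), (if 0 < Q j then (1:ℕ) else 0)
        = (if 0 < Q 0 then (1:ℕ) else 0) + ∑ j : Fin n, (if 0 < Q j.succ then (1:ℕ) else 0) :=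
      Fin.sum_univ_succ _
    have h2 : ∑ j : Fin (n+1), (if 0 < Q j then (1:ℕ) else 0)
        = (∑ j : Fin n, (if 0 < Q j.castSucc then (1:ℕ) else 0))
          + (if 0 < Q (Fin.last n) then (1:ℕ) else 0) :=
      Fin.sum_univ_castSucc _
    rw [if_neg e1, zero_add] at h1
    rw [if_neg e2, add_zero] at h2
    rw [← h1, h2]
  have final : (∑ j : Fin n, (if Q j.succ < Q j.castSucc then (1:ℕ) else 0))
      = ∑ j : Fin n, (if W j.castSucc < W j.succ then (1:ℕ) else 0) := by omega
  exact ⟨by rw [hdes, hasc, final], by rw [hasc, hasc2]⟩
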